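/- Let X be a Banach space and C > 0. If for all N ≥ 1 and all x_0,…,x_{p^{2N}−1} ∈ X the lower bound C^{−1} Σ_k ‖x_k‖² ≤ ∫_{ℤ_p} ‖Σ_k χ_p(kt/p^{2N}) x_k‖² dt holds, then there is C' > 0 such that for all N and all x_k ∈ X the upper bound ∫_{ℤ_p} ‖Σ_k χ_p(kt/p^{2N}) x_k‖² dt ≤ C' Σ_k ‖x_k‖² also holds. -/

import Mathlib

open MeasureTheory Metric Finset
open scoped ENNReal NNReal Classical

noncomputable def padicDigit {p : ℕ} [Fact p.Prime] (x : ℤ_[p]) (k : ℕ) : ℕ :=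
  x.appr (k+1) / p^k

noncomputable def padicTau {p : ℕ} [Fact p.Prime] (x : ℤ_[p]) : ℝ :=
  ∑' k : ℕ, (padicDigit x k : ℝ) / (p:ℝ)^(k+1)

noncomputable def padicFrac {p : ℕ} [Fact p.Prime] (x : ℚ_[p]) : ℚ :=
  if h : ‖x * (p:ℚ_[p])^((-x.valuation).toNat)‖ ≤ 1 then
    ((PadicInt.appr (⟨x * (p:ℚ_[p])^((-x.valuation).toNat), h⟩ : ℤ_[p]) ((-x.valuation).toNat) : ℚ)
      / (p:ℚ)^((-x.valuation).toNat))
  else 0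

noncomputable def padicChar {p : ℕ} [Fact p.Prime] (x : ℚ_[p]) : ℂ :=
  Complex.exp (2 * Real.pi * Complex.I * ((padicFrac x : ℚ) : ℂ))

def IsHilbertizable (X : Type*) [NormedAddCommGroup X] [NormedSpace ℂ X] : Prop :=
  ∃ (H : Type) (_ : NormedAddCommGroup H) (_ : InnerProductSpace ℂ H) (_ : CompleteSpace H),
    Nonempty (X ≃L[ℂ] H)

noncomputable def rademacherZp {p : ℕ} [Fact p.Prime] (i : ℕ) (t : ℤ_[p]) : ℝ :=
  Real.sign (Real.sin (2^i * Real.pi * padicTau t))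

noncomputable def padicFourier {p : ℕ} [Fact p.Prime] [MeasurableSpace ℚ_[p]]
    (μ : Measure ℚ_[p]) {X : Type*} [NormedAddCommGroup X] [NormedSpace ℂ X]
    (f : ℚ_[p] → X) : ℚ_[p] → X :=
  fun s => ∫ t, padicChar (s * t) • f t ∂μ

section AuxStmt18

set_option linter.unusedSectionVars false

variable {p : ℕ} [Fact p.Prime]

lemma padicFrac_spec (x : ℚ_[p]) :
    ∃ (a m : ℕ), padicFrac x = (a : ℚ) / (p:ℚ)^m ∧ a < p^m ∧
      ‖x - ((padicFrac x : ℚ) : ℚ_[p])‖ ≤ 1 := by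
  have hp1 : (1:ℕ) < p := (Fact.out : p.Prime).one_lt
  have hpR : (1:ℝ) < p := by exact_mod_cast hp1
  set m : ℕ := (-x.valuation).toNat with hm
  have h : ‖x * (p:ℚ_[p])^m‖ ≤ 1 := by
    rcases eq_or_ne x 0 with rfl | hx
    · simp
    · have hnp : ‖(p:ℚ_[p])^m‖ = (p:ℝ)^(-(m:ℤ)) := by
        rw [norm_pow, Padic.norm_p, inv_pow, ← zpow_natCast, ← zpow_neg]
      rw [norm_mul, Padic.norm_eq_zpow_neg_valuation hx, hnp, ← zpow_add₀ (by positivity : (p:ℝ) ≠ 0)]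
      calc (p:ℝ) ^ (-x.valuation + -(m:ℤ)) ≤ (p:ℝ)^(0:ℤ) := by
            apply zpow_le_zpow_right₀ hpR.le
            have := Int.self_le_toNat (-x.valuation)
            omega
        _ = 1 := by norm_num
  refine ⟨PadicInt.appr (⟨x * (p:ℚ_[p])^m, h⟩ : ℤ_[p]) m, m, ?_, PadicInt.appr_lt _ _, ?_⟩
  · rw [padicFrac, dif_pos h]
  · rw [padicFrac, dif_pos h]
    set y : ℤ_[p] := ⟨x * (p:ℚ_[p])^m, h⟩ with hy
    set a : ℕ := y.appr m with ha
    have hspec : ‖y - (a:ℤ_[p])‖ ≤ (p:ℝ)^(-(m:ℤ)) :=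
      (PadicInt.norm_le_pow_iff_mem_span_pow _ m).mpr (PadicInt.appr_spec m y)
    have hcoe : ((((a:ℚ)/(p:ℚ)^m : ℚ)) : ℚ_[p]) = (a:ℚ_[p]) / (p:ℚ_[p])^m := by
      push_cast; ring
    rw [hcoe]
    have hpne : ((p:ℚ_[p]))^m ≠ 0 := by
      apply pow_ne_zero; exact_mod_cast (Fact.out : p.Prime).ne_zero
    have : x - (a:ℚ_[p]) / (p:ℚ_[p])^m = (x * (p:ℚ_[p])^m - (a:ℚ_[p])) / (p:ℚ_[p])^m := by
      field_simp
    rw [this, norm_div]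
    have h2 : ‖x * (p:ℚ_[p])^m - (a:ℚ_[p])‖ ≤ (p:ℝ)^(-(m:ℤ)) := by
      have : (↑(y - (a:ℤ_[p])) : ℚ_[p]) = x * (p:ℚ_[p])^m - (a:ℚ_[p]) := by
        push_cast [hy]; ring_nf
        show ((y - (a:ℤ_[p]) : ℤ_[p]) : ℚ_[p]) = _
        rw [PadicInt.coe_sub, PadicInt.coe_natCast]
      rw [← this, PadicInt.padic_norm_e_of_padicInt]
      exact hspec
    have h3 : ‖(p:ℚ_[p])^m‖ = (p:ℝ)^(-(m:ℤ)) := by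
      rw [norm_pow, Padic.norm_p, inv_pow, ← zpow_natCast, ← zpow_neg]
    rw [h3, div_le_one (by positivity)]
    exact h2

lemma ratPPow_int {q : ℚ} (hq : ∃ (M : ℕ) (A : ℤ), q * (p:ℚ)^M = A)
    (hn : ‖((q:ℚ) : ℚ_[p])‖ ≤ 1) : ∃ B : ℤ, q = B := by
  obtain ⟨M, A, hA⟩ := hq
  have hpQ : ((p:ℚ))^M ≠ 0 := by
    apply pow_ne_zero; exact_mod_cast (Fact.out : p.Prime).ne_zero
  have hcast : ((q:ℚ):ℚ_[p]) * (p:ℚ_[p])^M = (A:ℚ_[p]) := by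
    have := congrArg (Rat.cast : ℚ → ℚ_[p]) hA
    push_cast at this
    exact this
  have hnorm : ‖(A:ℚ_[p])‖ ≤ (p:ℝ)^(-(M:ℤ)) := by
    rw [← hcast, norm_mul, norm_pow, Padic.norm_p, inv_pow, ← zpow_natCast, ← zpow_neg]
    calc ‖((q:ℚ):ℚ_[p])‖ * (p:ℝ)^(-(M:ℤ)) ≤ 1 * (p:ℝ)^(-(M:ℤ)) := by
          apply mul_le_mul_of_nonneg_right hn (by positivity)
      _ = (p:ℝ)^(-(M:ℤ)) := one_mul _
  have hdvd : ((p:ℤ)^M ∣ A) := (Padic.norm_int_le_pow_iff_dvd A M).mp hnorm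
  obtain ⟨B, hB⟩ := hdvd
  refine ⟨B, ?_⟩
  have : q * (p:ℚ)^M = (B:ℚ) * (p:ℚ)^M := by
    rw [hA, hB]; push_cast; ring
  exact mul_right_cancel₀ hpQ this

lemma padicFrac_ppow (x : ℚ_[p]) : ∃ (M : ℕ) (A : ℤ), padicFrac x * (p:ℚ)^M = A := by
  obtain ⟨a, m, h1, -, -⟩ := padicFrac_spec x
  refine ⟨m, a, ?_⟩
  rw [h1]
  field_simp
  have hpm : (p:ℚ)^m ≠ 0 := pow_ne_zero _ (by exact_mod_cast (Fact.out : p.Prime).ne_zero)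
  rw [mul_div_cancel_right₀ _ hpm]; norm_cast

lemma padicChar_add (u v : ℚ_[p]) : padicChar (u + v) = padicChar u * padicChar v := by
  set q : ℚ := padicFrac (u+v) - padicFrac u - padicFrac v with hq
  obtain ⟨B, hB⟩ : ∃ B : ℤ, q = B := by
    apply ratPPow_int (p := p)
    · obtain ⟨M1, A1, h1⟩ := padicFrac_ppow (p := p) (u+v)
      obtain ⟨M2, A2, h2⟩ := padicFrac_ppow (p := p) u
      obtain ⟨M3, A3, h3⟩ := padicFrac_ppow (p := p) v
      refine ⟨M1+M2+M3, A1 * p^(M2+M3) - A2 * p^(M1+M3) - A3 * p^(M1+M2), ?_⟩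
      push_cast
      rw [hq]
      rw [← h1, ← h2, ← h3]
      ring
    · obtain ⟨-, -, -, -, e1⟩ := padicFrac_spec (p := p) (u+v)
      obtain ⟨-, -, -, -, e2⟩ := padicFrac_spec (p := p) u
      obtain ⟨-, -, -, -, e3⟩ := padicFrac_spec (p := p) v
      have hrw : ((q:ℚ):ℚ_[p]) =
          -((u+v) - ((padicFrac (u+v) : ℚ):ℚ_[p])) + (u - ((padicFrac u : ℚ):ℚ_[p]))
            + (v - ((padicFrac v : ℚ):ℚ_[p])) := by
        rw [hq]; push_cast; ring
      rw [hrw]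
      refine le_trans (Padic.nonarchimedean _ _) (max_le (le_trans (Padic.nonarchimedean _ _) (max_le ?_ e2)) e3)
      rwa [norm_neg]
  have hfe : (padicFrac (u+v) : ℚ) = padicFrac u + padicFrac v + (B:ℚ) := by
    have := hB; rw [hq] at this; linarith
  rw [padicChar, padicChar, padicChar, hfe, ← Complex.exp_add]
  have harg : (2 * (Real.pi:ℂ) * Complex.I * ((padicFrac u + padicFrac v + (B:ℚ) : ℚ) : ℂ)) =
      (2 * (Real.pi:ℂ) * Complex.I * ((padicFrac u : ℚ):ℂ)
        + 2 * (Real.pi:ℂ) * Complex.I * ((padicFrac v : ℚ):ℂ)) + (B:ℂ) * (2 * Real.pi * Complex.I) := by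
    push_cast; ring
  rw [harg, Complex.exp_add, Complex.exp_int_mul_two_pi_mul_I, mul_one]

lemma padicChar_one_of_norm_le (x : ℚ_[p]) (hx : ‖x‖ ≤ 1) : padicChar x = 1 := by
  have hval : (0:ℤ) ≤ x.valuation := by
    rcases eq_or_ne x 0 with rfl | hx0
    · simp [Padic.valuation_zero]
    · by_contra hneg
      push_neg at hneg
      have hpR : (1:ℝ) < p := by exact_mod_cast (Fact.out : p.Prime).one_lt
      have := Padic.norm_eq_zpow_neg_valuation hx0
      rw [this] at hx
      have : (p:ℝ)^(0:ℤ) < (p:ℝ)^(-x.valuation) := by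
        apply zpow_lt_zpow_right₀ hpR; omega
      rw [zpow_zero] at this; linarith
  have hm : (-x.valuation).toNat = 0 := by omega
  have hfrac : padicFrac x = 0 := by
    rw [padicFrac]
    have h1 : ‖x * (p:ℚ_[p])^((-x.valuation).toNat)‖ ≤ 1 := by
      rw [hm]; simpa using hx
    rw [dif_pos h1]
    have key : ∀ (z : ℤ_[p]) (n : ℕ), n = 0 → z.appr n = 0 := by
      rintro z n rfl
      have := z.appr_lt 0
      simpa using this
    erw [key _ _ hm]
    simp
  rw [padicChar, hfrac]
  norm_num

lemma norm_le_one_of_padicChar_eq_one (x : ℚ_[p]) (hx : padicChar x = 1) : ‖x‖ ≤ 1 := by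
  rw [padicChar, Complex.exp_eq_one_iff] at hx
  obtain ⟨n, hn⟩ := hx
  have h2 : ((padicFrac x : ℚ) : ℂ) = (n : ℂ) := by
    have hne : (2 * Real.pi * Complex.I : ℂ) ≠ 0 := by
      exact mul_ne_zero (mul_ne_zero two_ne_zero (Complex.ofReal_ne_zero.mpr Real.pi_ne_zero)) Complex.I_ne_zero
    have h4 : (2 * Real.pi * Complex.I : ℂ) * ((padicFrac x : ℚ):ℂ)
        = (2 * Real.pi * Complex.I) * (n:ℂ) := by rw [hn]; ring
    exact mul_left_cancel₀ hne h4
  have h3 : (padicFrac x : ℚ) = (n : ℚ) := by exact_mod_cast h2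
  obtain ⟨-, -, -, -, e1⟩ := padicFrac_spec (p := p) x
  rw [h3] at e1
  calc ‖x‖ = ‖(x - ((n:ℚ):ℚ_[p])) + ((n:ℚ):ℚ_[p])‖ := by ring_nf
    _ ≤ max ‖x - ((n:ℚ):ℚ_[p])‖ ‖((n:ℚ):ℚ_[p])‖ := Padic.nonarchimedean _ _
    _ ≤ 1 := by
        apply max_le e1
        have : ((n:ℚ):ℚ_[p]) = (n : ℚ_[p]) := by push_cast; ring
        rw [this]
        exact Padic.norm_int_le_one n

lemma padicChar_zero : padicChar (0:ℚ_[p]) = 1 :=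
  padicChar_one_of_norm_le _ (by simp)

lemma padicChar_natmul (a : ℕ) (z : ℚ_[p]) :
    padicChar ((a:ℚ_[p]) * z) = padicChar z ^ a := by
  induction a with
  | zero => simpa using padicChar_zero
  | succ a ih =>
      have : ((a+1:ℕ):ℚ_[p]) * z = (a:ℚ_[p]) * z + z := by push_cast; ring
      rw [this, padicChar_add, ih, pow_succ]

lemma padicChar_sub_eq {u v : ℚ_[p]} (h : ‖u - v‖ ≤ 1) : padicChar u = padicChar v := by
  have : u = v + (u - v) := by ring
  rw [this, padicChar_add, padicChar_one_of_norm_le _ h, mul_one]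

lemma padicChar_geom_sum (n : ℕ) (z : ℚ_[p]) (hz : ‖(n:ℚ_[p]) * z‖ ≤ 1) :
    ∑ a ∈ Finset.range n, padicChar ((a:ℚ_[p]) * z) = if ‖z‖ ≤ 1 then (n:ℂ) else 0 := by
  split_ifs with h
  · simp [padicChar_natmul, padicChar_one_of_norm_le z h]
  · have hne : padicChar z ≠ 1 := fun hc => h (norm_le_one_of_padicChar_eq_one z hc)
    simp only [padicChar_natmul]
    rw [geom_sum_eq hne n, ← padicChar_natmul n z, padicChar_one_of_norm_le _ hz]
    simp

section Meas
variable [MeasurableSpace ℤ_[p]] [BorelSpace ℤ_[p]]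
variable (μ : Measure ℤ_[p]) [μ.IsAddHaarMeasure] (hμ : μ Set.univ = 1)

lemma appr_unique (n : ℕ) (t : ℤ_[p]) {a : ℕ} (ha : a < p^n)
    (h : ‖t - (a:ℤ_[p])‖ ≤ (p:ℝ)^(-(n:ℤ))) : t.appr n = a := by
  have h1 : ‖t - (t.appr n : ℤ_[p])‖ ≤ (p:ℝ)^(-(n:ℤ)) :=
    (PadicInt.norm_le_pow_iff_mem_span_pow _ n).mpr (PadicInt.appr_spec n t)
  have h2 : ‖(Int.cast ((t.appr n : ℤ) - (a:ℤ)) : ℤ_[p])‖ ≤ (p:ℝ)^(-(n:ℤ)) := by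
    have hdeq : (Int.cast ((t.appr n : ℤ) - (a:ℤ)) : ℤ_[p]) = (t - (a:ℤ_[p])) - (t - (t.appr n : ℤ_[p])) := by
      push_cast; ring
    rw [hdeq, sub_eq_add_neg]
    refine le_trans (PadicInt.nonarchimedean _ _) (max_le h ?_)
    rwa [norm_neg]
  have hdvd : ((p:ℤ)^n ∣ (t.appr n : ℤ) - (a:ℤ)) := PadicInt.norm_int_le_pow_iff_dvd.mp h2
  have habs : |(t.appr n : ℤ) - (a:ℤ)| < (p:ℤ)^n := by
    have h4 : ((t.appr n : ℤ)) < (p:ℤ)^n := by exact_mod_cast PadicInt.appr_lt t n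
    have h5 : ((a:ℤ)) < (p:ℤ)^n := by exact_mod_cast ha
    have h6 : (0:ℤ) ≤ (t.appr n : ℤ) := Int.natCast_nonneg _
    have h7 : (0:ℤ) ≤ (a:ℤ) := Int.natCast_nonneg _
    rw [abs_sub_lt_iff]; omega
  have h8 := Int.eq_zero_of_abs_lt_dvd hdvd habs
  omega

lemma measure_ball_const (n : ℕ) (a : ℕ) :
    μ (closedBall ((a:ℕ):ℤ_[p]) ((p:ℝ)^(-(n:ℤ)))) = μ (closedBall (0:ℤ_[p]) ((p:ℝ)^(-(n:ℤ)))) := by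
  have : closedBall ((a:ℕ):ℤ_[p]) ((p:ℝ)^(-(n:ℤ)))
      = (fun t => (-(a:ℤ_[p])) + t) ⁻¹' closedBall (0:ℤ_[p]) ((p:ℝ)^(-(n:ℤ))) := by
    ext t
    simp [Metric.mem_closedBall, dist_eq_norm, neg_add_eq_sub]
  rw [this, measure_preimage_add]

include hμ in
lemma measure_ball_inv (n : ℕ) :
    μ (closedBall (0:ℤ_[p]) ((p:ℝ)^(-(n:ℤ)))) = ((p:ℝ≥0∞)^n)⁻¹ := by
  classical
  have hp1 : 1 < p := (Fact.out : p.Prime).one_lt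
  set r : ℝ := (p:ℝ)^(-(n:ℤ)) with hr
  have hpart : Set.univ = ⋃ a ∈ Finset.range (p^n), closedBall ((a:ℕ):ℤ_[p]) r := by
    ext t
    simp only [Set.mem_univ, true_iff, Set.mem_iUnion]
    refine ⟨t.appr n, ?_, ?_⟩
    · simp [PadicInt.appr_lt t n]
    · rw [Metric.mem_closedBall, dist_eq_norm]
      exact (PadicInt.norm_le_pow_iff_mem_span_pow _ n).mpr (PadicInt.appr_spec n t)
  have hdisj : Set.PairwiseDisjoint (Finset.range (p^n) : Set ℕ)
      (fun a => closedBall ((a:ℕ):ℤ_[p]) r) := by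
    intro a ha b hb hab
    simp only [Finset.coe_range, Set.mem_Iio] at ha hb
    refine Set.disjoint_left.mpr fun t hta htb => hab ?_
    rw [Metric.mem_closedBall, dist_eq_norm] at hta htb
    rw [← appr_unique n t ha hta, ← appr_unique n t hb htb]
  have hsum : ∑ a ∈ Finset.range (p^n), μ (closedBall ((a:ℕ):ℤ_[p]) r) = 1 := by
    rw [← measure_biUnion_finset hdisj (fun a _ => measurableSet_closedBall), ← hpart, hμ]
  have hconst : ∀ a ∈ Finset.range (p^n),
      μ (closedBall ((a:ℕ):ℤ_[p]) r) = μ (closedBall (0:ℤ_[p]) r) :=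
    fun a _ => measure_ball_const μ n a
  rw [Finset.sum_congr rfl hconst, Finset.sum_const, Finset.card_range, nsmul_eq_mul] at hsum
  have hne : ((p:ℝ≥0∞)^n) ≠ 0 := by
    apply pow_ne_zero
    simp [(Fact.out : p.Prime).ne_zero]
  have hfin : ((p:ℝ≥0∞)^n) ≠ ⊤ := by
    exact ENNReal.pow_ne_top (by simp)
  calc μ (closedBall (0:ℤ_[p]) r)
      = ((p:ℝ≥0∞)^n)⁻¹ * ((p^n : ℕ) * μ (closedBall (0:ℤ_[p]) r)) := by
        push_cast
        rw [← mul_assoc, ENNReal.inv_mul_cancel hne hfin, one_mul]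
    _ = ((p:ℝ≥0∞)^n)⁻¹ := by rw [hsum, mul_one]

include hμ in
lemma integral_appr (n : ℕ) (F : ℕ → ℝ) :
    ∫ t, F (t.appr n) ∂μ = ((p:ℝ)^n)⁻¹ * ∑ a ∈ Finset.range (p^n), F a := by
  classical
  set r : ℝ := (p:ℝ)^(-(n:ℤ)) with hr
  have hfun : (fun t : ℤ_[p] => F (t.appr n))
      = fun t => ∑ a ∈ Finset.range (p^n), (closedBall ((a:ℕ):ℤ_[p]) r).indicator (fun _ => F a) t := by
    funext t
    rw [Finset.sum_eq_single (t.appr n)]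
    · rw [Set.indicator_of_mem]
      rw [Metric.mem_closedBall, dist_eq_norm]
      exact (PadicInt.norm_le_pow_iff_mem_span_pow _ n).mpr (PadicInt.appr_spec n t)
    · intro b hb hbne
      apply Set.indicator_of_notMem
      intro hmem
      rw [Metric.mem_closedBall, dist_eq_norm] at hmem
      exact hbne (appr_unique n t (Finset.mem_range.mp hb) hmem).symm
    · intro hnotin
      exact absurd (Finset.mem_range.mpr (PadicInt.appr_lt t n)) hnotin
  rw [hfun, integral_finset_sum]
  · have : ∀ a ∈ Finset.range (p^n),
        ∫ t, (closedBall ((a:ℕ):ℤ_[p]) r).indicator (fun _ => F a) t ∂μ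
          = ((p:ℝ)^n)⁻¹ * F a := by
      intro a _
      rw [integral_indicator_const _ measurableSet_closedBall]
      rw [measureReal_def]
      rw [measure_ball_const μ n a, measure_ball_inv μ hμ n]
      rw [smul_eq_mul]
      congr 1
      simp [ENNReal.toReal_inv, ENNReal.toReal_pow]
    rw [Finset.sum_congr rfl this, ← Finset.mul_sum]
  · intro a _
    apply (integrable_indicator_iff measurableSet_closedBall).mpr
    apply integrableOn_const
    exact (lt_of_le_of_lt (measure_mono (Set.subset_univ _)) (by rw [hμ]; exact ENNReal.one_lt_top)).ne
    exact enorm_ne_top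

end Meas

section Main
variable [MeasurableSpace ℤ_[p]] [BorelSpace ℤ_[p]]
variable (μ : Measure ℤ_[p]) [μ.IsAddHaarMeasure] (hμ : μ Set.univ = 1)
variable {X : Type*} [NormedAddCommGroup X] [NormedSpace ℂ X] [CompleteSpace X]

include hμ in
lemma integral_reduce (N : ℕ) (x : ℕ → X) :
    ∫ t, ‖∑ k ∈ Finset.range (p^(2*N)),
        padicChar ((k:ℚ_[p]) * (t:ℚ_[p]) / (p:ℚ_[p])^(2*N)) • x k‖^2 ∂μ
      = ((p:ℝ)^(2*N))⁻¹ * ∑ a ∈ Finset.range (p^(2*N)),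
          ‖∑ k ∈ Finset.range (p^(2*N)),
            padicChar ((k:ℚ_[p]) * (a:ℚ_[p]) / (p:ℚ_[p])^(2*N)) • x k‖^2 := by
  set F : ℕ → ℝ := fun a => ‖∑ k ∈ Finset.range (p^(2*N)),
      padicChar ((k:ℚ_[p]) * (a:ℚ_[p]) / (p:ℚ_[p])^(2*N)) • x k‖^2 with hF
  have hfun : (fun t : ℤ_[p] => ‖∑ k ∈ Finset.range (p^(2*N)),
      padicChar ((k:ℚ_[p]) * (t:ℚ_[p]) / (p:ℚ_[p])^(2*N)) • x k‖^2)
      = fun t => F (t.appr (2*N)) := by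
    funext t
    rw [hF]
    congr 2
    apply Finset.sum_congr rfl
    intro k _
    congr 1
    apply padicChar_sub_eq
    have heq : (k:ℚ_[p]) * (t:ℚ_[p]) / (p:ℚ_[p])^(2*N)
        - (k:ℚ_[p]) * ((t.appr (2*N) : ℕ):ℚ_[p]) / (p:ℚ_[p])^(2*N)
        = (k:ℚ_[p]) * (((t - ((t.appr (2*N) : ℕ):ℤ_[p]) : ℤ_[p]) : ℚ_[p])) / (p:ℚ_[p])^(2*N) := by
      push_cast
      ring
    rw [heq]
    have h1 : ‖(k:ℚ_[p])‖ ≤ 1 := by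
      have := Padic.norm_int_le_one (p := p) (k : ℤ)
      simpa using this
    have h2 : ‖(((t - ((t.appr (2*N) : ℕ):ℤ_[p]) : ℤ_[p]) : ℚ_[p]))‖ ≤ (p:ℝ)^(-(2*N:ℕ):ℤ) := by
      rw [PadicInt.padic_norm_e_of_padicInt]
      exact (PadicInt.norm_le_pow_iff_mem_span_pow _ (2*N)).mpr (PadicInt.appr_spec (2*N) t)
    have h3 : ‖(p:ℚ_[p])^(2*N)‖ = (p:ℝ)^(-(2*N:ℕ):ℤ) := by
      rw [norm_pow, Padic.norm_p, inv_pow, ← zpow_natCast, ← zpow_neg]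
    have hpg : (0:ℝ) < (p:ℝ)^(-(2*N:ℕ):ℤ) := by
      apply zpow_pos
      exact_mod_cast (Fact.out : p.Prime).pos
    rw [norm_div, norm_mul, h3]
    rw [div_le_one hpg]
    calc ‖(k:ℚ_[p])‖ * ‖(((t - ((t.appr (2*N) : ℕ):ℤ_[p]) : ℤ_[p]) : ℚ_[p]))‖
        ≤ 1 * (p:ℝ)^(-(2*N:ℕ):ℤ) := by
          apply mul_le_mul h1 h2 (norm_nonneg _) zero_le_one
      _ = (p:ℝ)^(-(2*N:ℕ):ℤ) := one_mul _
  rw [hfun, integral_appr μ hμ (2*N) F]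

lemma dft_dft (N : ℕ) (x : ℕ → X) (b : ℕ) (hb : b < p^(2*N)) :
    ∑ a ∈ Finset.range (p^(2*N)), padicChar ((a:ℚ_[p]) * (b:ℚ_[p]) / (p:ℚ_[p])^(2*N)) •
        (∑ k ∈ Finset.range (p^(2*N)), padicChar ((k:ℚ_[p]) * (a:ℚ_[p]) / (p:ℚ_[p])^(2*N)) • x k)
      = ((p^(2*N) : ℕ):ℂ) • x (if b = 0 then 0 else p^(2*N) - b) := by
  classical
  set n : ℕ := p^(2*N) with hn
  have hppos : (0:ℕ) < p := (Fact.out : p.Prime).pos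
  have hnpos : 0 < n := pow_pos hppos _
  set kb : ℕ := if b = 0 then 0 else n - b with hkb
  have hkbn : kb < n := by
    rw [hkb]; split_ifs with h
    · exact hnpos
    · omega
  have step1 : ∀ a ∈ Finset.range n,
      padicChar ((a:ℚ_[p]) * (b:ℚ_[p]) / (p:ℚ_[p])^(2*N)) •
        (∑ k ∈ Finset.range n, padicChar ((k:ℚ_[p]) * (a:ℚ_[p]) / (p:ℚ_[p])^(2*N)) • x k)
      = ∑ k ∈ Finset.range n,
          (padicChar ((a:ℚ_[p]) * (((b+k:ℕ)):ℚ_[p]) / (p:ℚ_[p])^(2*N))) • x k := by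
    intro a _
    rw [Finset.smul_sum]
    apply Finset.sum_congr rfl
    intro k _
    rw [smul_smul, ← padicChar_add]
    congr 1
    push_cast
    ring
  rw [Finset.sum_congr rfl step1, Finset.sum_comm]
  have step2 : ∀ k ∈ Finset.range n,
      ∑ a ∈ Finset.range n, (padicChar ((a:ℚ_[p]) * (((b+k:ℕ)):ℚ_[p]) / (p:ℚ_[p])^(2*N))) • x k
        = (if k = kb then ((n:ℕ):ℂ) else 0) • x k := by
    intro k hk
    rw [← Finset.sum_smul]
    congr 1
    have hgeo := padicChar_geom_sum (p := p) n ((((b+k:ℕ)):ℚ_[p]) / (p:ℚ_[p])^(2*N)) ?_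
    · have harg : ∀ a : ℕ, (a:ℚ_[p]) * ((((b+k:ℕ)):ℚ_[p]) / (p:ℚ_[p])^(2*N))
          = (a:ℚ_[p]) * (((b+k:ℕ)):ℚ_[p]) / (p:ℚ_[p])^(2*N) := fun a => by ring
      simp only [harg] at hgeo
      rw [hgeo]
      have hdvd_iff : ‖(((b+k:ℕ)):ℚ_[p]) / (p:ℚ_[p])^(2*N)‖ ≤ 1 ↔ p^(2*N) ∣ (b+k) := by
        have h3 : ‖(p:ℚ_[p])^(2*N)‖ = (p:ℝ)^(-(2*N:ℕ):ℤ) := by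
          rw [norm_pow, Padic.norm_p, inv_pow, ← zpow_natCast, ← zpow_neg]
        have hpg : (0:ℝ) < (p:ℝ)^(-(2*N:ℕ):ℤ) := by
          apply zpow_pos
          exact_mod_cast hppos
        rw [norm_div, h3, div_le_one hpg]
        have h4 : ((b+k:ℕ):ℚ_[p]) = (((b+k:ℕ):ℤ):ℚ_[p]) := by push_cast; ring
        rw [h4, Padic.norm_int_le_pow_iff_dvd]
        constructor
        · intro hh; exact_mod_cast hh
        · intro hh; exact_mod_cast hh
      have hcase : (p^(2*N) ∣ (b+k)) ↔ k = kb := by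
        have hkn : k < n := Finset.mem_range.mp hk
        rw [← hn]
        constructor
        · rintro ⟨c, hc⟩
          have h1 : b + k < 2*n := by omega
          have h2 : n*c < n*2 := by omega
          have h3 : c < 2 := Nat.lt_of_mul_lt_mul_left h2
          have h4 : b + k = 0 ∨ b + k = n := by
            interval_cases c <;> omega
          rw [hkb]
          split_ifs with h0 <;> omega
        · intro hkeq
          rw [hkeq, hkb]
          split_ifs with h
          · simp [h]
          · have : b + (n - b) = n := by omega
            rw [this]
      by_cases hcond : ‖(((b+k:ℕ)):ℚ_[p]) / (p:ℚ_[p])^(2*N)‖ ≤ 1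
      · rw [if_pos hcond, if_pos (hcase.mp (hdvd_iff.mp hcond))]
      · rw [if_neg hcond, if_neg (fun hkeq => hcond (hdvd_iff.mpr (hcase.mpr hkeq)))]
    · have h4 : (n:ℚ_[p]) * ((((b+k:ℕ)):ℚ_[p]) / (p:ℚ_[p])^(2*N)) = ((b+k:ℕ):ℚ_[p]) := by
        rw [hn]
        have hpne : ((p:ℚ_[p]))^(2*N) ≠ 0 :=
          pow_ne_zero _ (by exact_mod_cast hppos.ne')
        push_cast
        field_simp
      rw [h4]
      have := Padic.norm_int_le_one (p := p) ((b+k : ℕ) : ℤ)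
      simpa using this
  rw [Finset.sum_congr rfl step2]
  rw [Finset.sum_eq_single kb]
  · rw [if_pos rfl]
  · intro c _ hne
    rw [if_neg hne, zero_smul]
  · intro h
    exact absurd (Finset.mem_range.mpr hkbn) h

end Main

end AuxStmt18

theorem stmt18 {p : ℕ} [Fact p.Prime] [MeasurableSpace ℤ_[p]] [BorelSpace ℤ_[p]]
    (μ : Measure ℤ_[p]) [μ.IsAddHaarMeasure] (hμ : μ Set.univ = 1)
    {X : Type*} [NormedAddCommGroup X] [NormedSpace ℂ X] [CompleteSpace X]
    (C : ℝ) (hC : 0 < C)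
    (hlow : ∀ (N : ℕ), 1 ≤ N → ∀ x : ℕ → X,
      C⁻¹ * ∑ k ∈ Finset.range (p^(2*N)), ‖x k‖^2
        ≤ ∫ t, ‖∑ k ∈ Finset.range (p^(2*N)), padicChar ((k:ℚ_[p]) * (t:ℚ_[p]) / (p:ℚ_[p])^(2*N)) • x k‖^2 ∂μ) :
    ∃ C' : ℝ, 0 < C' ∧ ∀ (N : ℕ), 1 ≤ N → ∀ x : ℕ → X,
      ∫ t, ‖∑ k ∈ Finset.range (p^(2*N)), padicChar ((k:ℚ_[p]) * (t:ℚ_[p]) / (p:ℚ_[p])^(2*N)) • x k‖^2 ∂μ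
        ≤ C' * ∑ k ∈ Finset.range (p^(2*N)), ‖x k‖^2 := by
  refine ⟨C, hC, fun N hN x => ?_⟩
  have hppos : (0:ℕ) < p := (Fact.out : p.Prime).pos
  set n : ℕ := p^(2*N) with hn
  have hnpos : 0 < n := pow_pos hppos _
  have hP : ((n:ℕ):ℝ) = (p:ℝ)^(2*N) := by push_cast [hn]; ring
  have hPpos : (0:ℝ) < (p:ℝ)^(2*N) := by positivity
  set y : ℕ → X := fun a => ∑ k ∈ Finset.range (p^(2*N)),
      padicChar ((k:ℚ_[p]) * (a:ℚ_[p]) / (p:ℚ_[p])^(2*N)) • x k with hy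
  have hIx := integral_reduce μ hμ N x
  have hIy := integral_reduce μ hμ N y
  -- the inner sums of hIy collapse
  have hcollapse : ∀ b ∈ Finset.range n,
      ‖∑ k ∈ Finset.range (p^(2*N)), padicChar ((k:ℚ_[p]) * (b:ℚ_[p]) / (p:ℚ_[p])^(2*N)) • y k‖^2
        = ((n:ℕ):ℝ)^2 * ‖x (if b = 0 then 0 else n - b)‖^2 := by
    intro b hb
    have hd := dft_dft N x b (Finset.mem_range.mp hb)
    have : ∑ k ∈ Finset.range (p^(2*N)), padicChar ((k:ℚ_[p]) * (b:ℚ_[p]) / (p:ℚ_[p])^(2*N)) • y k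
        = ((p^(2*N) : ℕ):ℂ) • x (if b = 0 then 0 else p^(2*N) - b) := by
      rw [← hd]
    rw [this, norm_smul]
    rw [RCLike.norm_natCast]
    rw [mul_pow, ← hn]
  have hsum_eq : ∑ b ∈ Finset.range n, ‖x (if b = 0 then 0 else n - b)‖^2
      = ∑ k ∈ Finset.range n, ‖x k‖^2 := by
    apply Finset.sum_nbij' (i := fun b => if b = 0 then 0 else n - b)
      (j := fun b => if b = 0 then 0 else n - b)
    · intro a ha
      simp only [Finset.mem_range] at *
      split_ifs <;> omega
    · intro a ha
      simp only [Finset.mem_range] at *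
      split_ifs <;> omega
    · intro a ha
      simp only [Finset.mem_range] at ha
      rcases eq_or_ne a 0 with rfl | h
      · simp
      · rw [if_neg h, if_neg (by omega), Nat.sub_sub_self (by omega)]
    · intro a ha
      simp only [Finset.mem_range] at ha
      rcases eq_or_ne a 0 with rfl | h
      · simp
      · rw [if_neg h, if_neg (by omega), Nat.sub_sub_self (by omega)]
    · intro a _
      rfl
  have hIy2 : ∫ t, ‖∑ k ∈ Finset.range (p^(2*N)),
      padicChar ((k:ℚ_[p]) * (t:ℚ_[p]) / (p:ℚ_[p])^(2*N)) • y k‖^2 ∂μ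
      = (p:ℝ)^(2*N) * ∑ k ∈ Finset.range n, ‖x k‖^2 := by
    rw [hIy, Finset.sum_congr rfl hcollapse, ← Finset.mul_sum, hsum_eq, hP]
    field_simp
  have hlowy := hlow N hN y
  rw [hIy2] at hlowy
  have hSy : ∑ a ∈ Finset.range (p^(2*N)), ‖y a‖^2
      ≤ C * ((p:ℝ)^(2*N) * ∑ k ∈ Finset.range n, ‖x k‖^2) := by
    have := mul_le_mul_of_nonneg_left hlowy hC.le
    rwa [← mul_assoc, mul_inv_cancel₀ hC.ne', one_mul] at this
  rw [hIx]
  calc ((p:ℝ)^(2*N))⁻¹ * ∑ a ∈ Finset.range (p^(2*N)),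
        ‖∑ k ∈ Finset.range (p^(2*N)), padicChar ((k:ℚ_[p]) * (a:ℚ_[p]) / (p:ℚ_[p])^(2*N)) • x k‖^2
      = ((p:ℝ)^(2*N))⁻¹ * ∑ a ∈ Finset.range (p^(2*N)), ‖y a‖^2 := rfl
    _ ≤ ((p:ℝ)^(2*N))⁻¹ * (C * ((p:ℝ)^(2*N) * ∑ k ∈ Finset.range n, ‖x k‖^2)) := by
        apply mul_le_mul_of_nonneg_left hSy (by positivity)
    _ = C * ∑ k ∈ Finset.range n, ‖x k‖^2 := by
        field_simp
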